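/- Assume CH. If M is a structure of cardinality ω₁ in a relational vocabulary with exactly λ automorphisms where ω₁ < λ < 2^{ω₁}, then there exists a tree T of height ω₁, with at most ω₁ nodes on each level, having exactly λ branches of length ω₁. -/

import Mathlib

open Cardinal FirstOrder

noncomputable section

/-- ω₁ as an ordinal. -/
abbrev om1 : Ordinal := (Cardinal.aleph 1).ord

/-- The countable ordinals, as a linearly ordered type. -/
abbrev O1 : Type 1 := {o : Ordinal // o < om1}

namespace TreeAux

/-- the canonical iso between countable ordinals and the carrier of `om1` -/
def iso : Set.Iio om1 ≃o om1.ToType := Ordinal.ToType.mk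

/-- the element of `om1.ToType` corresponding to a countable ordinal -/
def oOf (i : O1) : om1.ToType := iso ⟨i.1, i.2⟩

lemma om1_isLimit : Order.IsSuccLimit om1 := Cardinal.isSuccLimit_ord (Cardinal.aleph0_le_aleph 1)

lemma lt_add_one_ord (a : Ordinal) : a < a + 1 := by
  rw [Ordinal.add_one_eq_succ]; exact Order.lt_succ a

lemma add_one_lt_om1 {a : Ordinal} (h : a < om1) : a + 1 < om1 := by
  rw [Ordinal.add_one_eq_succ]; exact om1_isLimit.succ_lt h

variable (L : FirstOrder.Language) (M : Type) [L.Structure M] (e : M ≃ om1.ToType)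

/-- the padded restriction of a function to an initial segment -/
def pad (f : M → M) (o : om1.ToType) (a : M) : M := if e a < o then f a else a

/-- nodes of the tree: level together with padded restrictions of an automorphism
and its inverse -/
def Node (x : om1.ToType × (M → M) × (M → M)) : Prop :=
  ∃ σ : M ≃[L] M, ∀ a : M,
    (e a < x.1 → x.2.1 a = σ a ∧ x.2.2 a = σ.symm a) ∧
    (¬ e a < x.1 → x.2.1 a = a ∧ x.2.2 a = a)

/-- The tree -/
def T : Type := {x : om1.ToType × (M → M) × (M → M) // Node L M e x}

/-- the level of a node -/
def lvl (t : T L M e) : Ordinal := (iso.symm t.1.1 : Ordinal)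

/-- tree order -/
def TLT (x y : T L M e) : Prop :=
  x.1.1 < y.1.1 ∧ ∀ a, e a < x.1.1 → y.1.2.1 a = x.1.2.1 a ∧ y.1.2.2 a = x.1.2.2 a

variable {L M e}

lemma lvl_lt (t : T L M e) : lvl L M e t < om1 := (iso.symm t.1.1).2

lemma lvl_eq_iff {t : T L M e} {i : O1} : lvl L M e t = i.1 ↔ t.1.1 = oOf i := by
  unfold lvl oOf
  constructor
  · intro h
    have : iso.symm t.1.1 = ⟨i.1, i.2⟩ := Subtype.ext h
    rw [← this, OrderIso.apply_symm_apply]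
  · intro h
    rw [h, OrderIso.symm_apply_apply]

lemma lt_oOf_iff {a : M} {i : O1} :
    e a < oOf i ↔ (iso.symm (e a) : Ordinal) < i.1 := by
  rw [show e a = iso (iso.symm (e a)) from (OrderIso.apply_symm_apply _ _).symm, oOf,
    iso.lt_iff_lt, OrderIso.symm_apply_apply]
  exact Subtype.coe_lt_coe.symm

lemma oOf_lt_oOf_iff {i j : O1} : oOf i < oOf j ↔ i < j := by
  rw [oOf, oOf, iso.lt_iff_lt]
  exact Iff.rfl

lemma tlt_lvl {x y : T L M e} (h : TLT L M e x y) : lvl L M e x < lvl L M e y := by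
  have := iso.symm.lt_iff_lt.2 h.1
  exact this

lemma node_ext {x y : T L M e} (h1 : x.1.1 = y.1.1)
    (h2 : ∀ a, e a < x.1.1 → x.1.2.1 a = y.1.2.1 a ∧ x.1.2.2 a = y.1.2.2 a) : x = y := by
  obtain ⟨σ, hσ⟩ := x.2
  obtain ⟨τ, hτ⟩ := y.2
  apply Subtype.ext
  apply Prod.ext h1
  apply Prod.ext
  · funext a
    by_cases ha : e a < x.1.1
    · exact (h2 a ha).1
    · rw [((hσ a).2 ha).1, ((hτ a).2 (h1 ▸ ha)).1]
  · funext a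
    by_cases ha : e a < x.1.1
    · exact (h2 a ha).2
    · rw [((hσ a).2 ha).2, ((hτ a).2 (h1 ▸ ha)).2]

/-- the node given by an automorphism and a level -/
def nd (σ : M ≃[L] M) (i : O1) : T L M e :=
  ⟨(oOf i, pad M e σ (oOf i), pad M e σ.symm (oOf i)), σ, fun a => by
    constructor <;> intro h <;> simp [pad, h]⟩

lemma lvl_nd (σ : M ≃[L] M) (i : O1) : lvl L M e (nd σ i) = i.1 :=
  lvl_eq_iff.2 rfl

/-- the branch given by an automorphism -/
def Φ (σ : M ≃[L] M) : O1 → T L M e := fun i => nd σ i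

lemma Φ_mono (σ : M ≃[L] M) {i j : O1} (hij : i < j) :
    TLT L M e (Φ σ i) (Φ σ j) := by
  refine ⟨oOf_lt_oOf_iff.2 hij, fun a ha => ?_⟩
  have ha0 : e a < oOf i := ha
  have ha' : e a < oOf j := ha0.trans (oOf_lt_oOf_iff.2 hij)
  constructor <;> simp [Φ, nd, pad, ha0, ha']

lemma Φ_apply_f (σ : M ≃[L] M) (i : O1) (a : M) (ha : e a < oOf i) :
    ((Φ σ i : T L M e)).1.2.1 a = σ a := by simp [Φ, nd, pad, ha]

lemma Φ_inj : Function.Injective (Φ (L := L) (M := M) (e := e)) := by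
  intro σ τ h
  ext a
  have hlt : (iso.symm (e a) : Ordinal) < om1 := (iso.symm (e a)).2
  set i : O1 := ⟨(iso.symm (e a) : Ordinal) + 1, add_one_lt_om1 hlt⟩ with hi
  have ha : e a < oOf i := lt_oOf_iff.2 (lt_add_one_ord _)
  have h1 := Φ_apply_f σ i a ha
  have h2 := Φ_apply_f τ i a ha
  rw [h] at h1
  rw [h1] at h2
  exact h2


lemma Φ_apply_g (σ : M ≃[L] M) (i : O1) (a : M) (ha : e a < oOf i) :
    ((Φ σ i : T L M e)).1.2.2 a = σ.symm a := by simp [Φ, nd, pad, ha]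

lemma Φ_surj [L.IsRelational] (b : O1 → T L M e)
    (hb1 : ∀ i j : O1, i < j → TLT L M e (b i) (b j))
    (hb2 : ∀ i : O1, lvl L M e (b i) = i.1) :
    ∃ σ : M ≃[L] M, Φ σ = b := by
  have hbo : ∀ i : O1, (b i).1.1 = oOf i := fun i => lvl_eq_iff.1 (hb2 i)
  have hcoh : ∀ (i j : O1) (a : M), e a < oOf i → e a < oOf j →
      (b i).1.2.1 a = (b j).1.2.1 a ∧ (b i).1.2.2 a = (b j).1.2.2 a := by
    intro i j a hi hj
    rcases lt_trichotomy i j with h | h | h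
    · have := (hb1 i j h).2 a (by rw [hbo i]; exact hi)
      exact ⟨this.1.symm, this.2.symm⟩
    · rw [h]; exact ⟨rfl, rfl⟩
    · exact (hb1 j i h).2 a (by rw [hbo j]; exact hj)
  set idx : M → O1 := fun a => ⟨(iso.symm (e a) : Ordinal) + 1,
    add_one_lt_om1 (iso.symm (e a)).2⟩ with hidxdef
  have hidx : ∀ a : M, e a < oOf (idx a) := fun a => lt_oOf_iff.2 (lt_add_one_ord _)
  set F : M → M := fun a => (b (idx a)).1.2.1 a with hFdef
  set G : M → M := fun a => (b (idx a)).1.2.2 a with hGdef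
  have hFe : ∀ (i : O1) (a : M), e a < oOf i → F a = (b i).1.2.1 a :=
    fun i a h => (hcoh (idx a) i a (hidx a) h).1
  have hGe : ∀ (i : O1) (a : M), e a < oOf i → G a = (b i).1.2.2 a :=
    fun i a h => (hcoh (idx a) i a (hidx a) h).2
  have hwit : ∀ i : O1, ∃ σ : M ≃[L] M, ∀ a : M, e a < oOf i →
      (b i).1.2.1 a = σ a ∧ (b i).1.2.2 a = σ.symm a := by
    intro i
    obtain ⟨σ, hσ⟩ := (b i).2
    exact ⟨σ, fun a h => (hσ a).1 (by rw [hbo i]; exact h)⟩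
  have key2 : ∀ a c : M, ∃ i : O1, e a < oOf i ∧ e c < oOf i := by
    intro a c
    refine ⟨⟨max ((iso.symm (e a) : Ordinal)) ((iso.symm (e c) : Ordinal)) + 1,
      add_one_lt_om1 (max_lt (iso.symm (e a)).2 (iso.symm (e c)).2)⟩, ?_, ?_⟩
    · exact lt_oOf_iff.2 ((le_max_left _ _).trans_lt (lt_add_one_ord _))
    · exact lt_oOf_iff.2 ((le_max_right _ _).trans_lt (lt_add_one_ord _))
  have hGF : ∀ a, G (F a) = a := by
    intro a
    obtain ⟨i, hi1, hi2⟩ := key2 a (F a)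
    obtain ⟨σ, hσ⟩ := hwit i
    rw [hGe i (F a) hi2, (hσ (F a) hi2).2, hFe i a hi1, (hσ a hi1).1,
      σ.symm_apply_apply]
  have hFG : ∀ a, F (G a) = a := by
    intro a
    obtain ⟨i, hi1, hi2⟩ := key2 a (G a)
    obtain ⟨σ, hσ⟩ := hwit i
    rw [hFe i (G a) hi2, (hσ (G a) hi2).1, hGe i a hi1, (hσ a hi1).2,
      σ.apply_symm_apply]
  have hrel : ∀ {n : ℕ} (r : L.Relations n) (x : Fin n → M),
      Language.Structure.RelMap r (F ∘ x) ↔ Language.Structure.RelMap r x := by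
    intro n r x
    have hsup : (Finset.univ.sup fun k => (iso.symm (e (x k)) : Ordinal)) < om1 := by
      refine (Finset.sup_lt_iff (show ⊥ < om1 from om1_isLimit.pos)).2 ?_
      exact fun k _ => (iso.symm (e (x k))).2
    set i : O1 := ⟨(Finset.univ.sup fun k => (iso.symm (e (x k)) : Ordinal)) + 1,
      add_one_lt_om1 hsup⟩ with hid
    have hk : ∀ k, e (x k) < oOf i :=
      fun k => lt_oOf_iff.2 ((Finset.le_sup (Finset.mem_univ k)).trans_lt (lt_add_one_ord _))
    obtain ⟨σ, hσ⟩ := hwit i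
    have hfx : F ∘ x = ⇑σ ∘ x := by
      funext k
      rw [Function.comp_apply, Function.comp_apply, hFe i (x k) (hk k), (hσ (x k) (hk k)).1]
    rw [hfx]
    exact σ.map_rel' r x
  set σ0 : M ≃[L] M :=
    ⟨⟨F, G, hGF, hFG⟩, fun {n} f _ => isEmptyElim f, hrel⟩ with hσ0def
  have hc1 : ∀ a, σ0 a = F a := fun a => rfl
  have hc2 : ∀ a, σ0.symm a = G a := fun a => rfl
  refine ⟨σ0, funext fun i => ?_⟩
  apply node_ext
  · exact (hbo i).symm
  · intro a ha
    have ha' : e a < oOf i := ha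
    constructor
    · rw [Φ_apply_f σ0 i a ha', hc1 a, hFe i a ha']
    · rw [Φ_apply_g σ0 i a ha', hc2 a, hGe i a ha']

lemma level_le (hCH : (2 : Cardinal.{0}) ^ Cardinal.aleph0 = Cardinal.aleph 1)
    (hM : #M = Cardinal.aleph 1) (α : Ordinal) :
    #{t : T L M e // lvl L M e t = α} ≤ Cardinal.aleph 1 := by
  by_cases hα : α < om1
  · set i : O1 := ⟨α, hα⟩ with hidef
    set o := oOf i with hodef
    have hinj : Function.Injective (fun t : {t : T L M e // lvl L M e t = α} =>
        (fun a : {a : M // e a < o} => ((t.1.1.2.1 a.1, t.1.1.2.2 a.1) : M × M))) := by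
      intro t s h
      have ht : t.1.1.1 = o := lvl_eq_iff.1 t.2
      have hs : s.1.1.1 = o := lvl_eq_iff.1 s.2
      apply Subtype.ext
      apply node_ext (by rw [ht, hs])
      intro a ha
      rw [ht] at ha
      have := congrFun h ⟨a, ha⟩
      exact ⟨congrArg Prod.fst this, congrArg Prod.snd this⟩
    have h1 : #{t : T L M e // lvl L M e t = α} ≤ #({a : M // e a < o} → M × M) :=
      Cardinal.mk_le_of_injective hinj
    have hMM : #(M × M) = Cardinal.aleph 1 := by
      rw [Cardinal.mk_prod, hM]
      simp only [Cardinal.lift_id]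
      rw [Cardinal.mul_eq_self (Cardinal.aleph0_le_aleph 1)]
    have hκ : #{a : M // e a < o} ≤ Cardinal.aleph0 := by
      set β : Ordinal := (iso.symm o : Ordinal) with hβ
      have hβlt : β < om1 := (iso.symm o).2
      have hmem : ∀ a : {a : M // e a < o}, (iso.symm (e a.1) : Ordinal) ∈ Set.Iio β := by
        intro a
        exact Subtype.coe_lt_coe.2 (iso.symm.lt_iff_lt.2 a.2)
      have hinj2 : Function.Injective (fun a : {a : M // e a < o} =>
          (⟨(iso.symm (e a.1) : Ordinal), hmem a⟩ : Set.Iio β)) := by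
        intro a c h
        simp only [Subtype.mk.injEq] at h
        apply Subtype.ext
        apply e.injective
        apply iso.symm.injective
        exact Subtype.ext h
      have hle : Cardinal.lift.{1} #{a : M // e a < o} ≤ Cardinal.lift.{0} #(Set.Iio β) :=
        Cardinal.lift_mk_le'.2 ⟨⟨_, hinj2⟩⟩
      rw [Ordinal.mk_Iio_ordinal, Cardinal.lift_lift, Cardinal.lift_le] at hle
      refine hle.trans ?_
      exact Order.lt_succ_iff.1 (Cardinal.succ_aleph0.symm ▸ Cardinal.lt_ord.1 hβlt)
    have h2 : #({a : M // e a < o} → M × M) ≤ Cardinal.aleph 1 := by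
      rw [← Cardinal.power_def, hMM]
      calc Cardinal.aleph 1 ^ #{a : M // e a < o}
          ≤ Cardinal.aleph 1 ^ Cardinal.aleph0 :=
            Cardinal.power_le_power_left
              ((Cardinal.aleph0_pos.trans Cardinal.aleph0_lt_aleph_one).ne') hκ
        _ = Cardinal.aleph 1 := by
            conv_lhs => rw [← hCH]
            rw [← Cardinal.power_mul, Cardinal.aleph0_mul_aleph0, hCH]
    exact h1.trans h2
  · have : IsEmpty {t : T L M e // lvl L M e t = α} :=
      ⟨fun t => hα (t.2 ▸ lvl_lt t.1)⟩
    simp [Cardinal.mk_eq_zero]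

end TreeAux


theorem tree_of_structure_with_lambda_automorphisms
    (hCH : (2 : Cardinal.{0}) ^ Cardinal.aleph0 = Cardinal.aleph 1)
    (L : FirstOrder.Language) [L.IsRelational] (M : Type) [L.Structure M]
    (hM : #M = Cardinal.aleph 1)
    (lam : Cardinal.{0}) (h1 : Cardinal.aleph 1 < lam) (h2 : lam < 2 ^ Cardinal.aleph 1)
    (haut : #(M ≃[L] M) = lam) :
    ∃ (T : Type) (lt : T → T → Prop) (lvl : T → Ordinal),
      IsStrictOrder T lt ∧
      (∀ x y, lt x y → lvl x < lvl y) ∧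
      (∀ x y z, lt x z → lt y z → x = y ∨ lt x y ∨ lt y x) ∧
      (∀ t, lvl t < om1) ∧
      (∀ α < om1, ∃ t, lvl t = α) ∧
      (∀ α : Ordinal, #{t : T // lvl t = α} ≤ Cardinal.aleph 1) ∧
      #{b : O1 → T // (∀ i j : O1, i < j → lt (b i) (b j)) ∧
          ∀ α : O1, lvl (b α) = (α : Ordinal)} = Cardinal.lift.{1} lam := by
  have hMT : #M = #om1.ToType := by rw [hM, Cardinal.mk_ord_toType]
  obtain ⟨e⟩ := Cardinal.eq.1 hMT
  refine ⟨TreeAux.T L M e, TreeAux.TLT L M e, TreeAux.lvl L M e, ?_, ?_, ?_, ?_, ?_, ?_, ?_⟩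
  · haveI : IsIrrefl (TreeAux.T L M e) (TreeAux.TLT L M e) := ⟨fun x h => lt_irrefl _ h.1⟩
    haveI : IsTrans (TreeAux.T L M e) (TreeAux.TLT L M e) :=
      ⟨fun x y z hxy hyz => ⟨hxy.1.trans hyz.1, fun a ha =>
        ⟨(hyz.2 a (ha.trans hxy.1)).1.trans (hxy.2 a ha).1,
         (hyz.2 a (ha.trans hxy.1)).2.trans (hxy.2 a ha).2⟩⟩⟩
    exact ⟨⟩
  · exact fun x y h => TreeAux.tlt_lvl h
  · intro x y z hx hy
    rcases lt_trichotomy x.1.1 y.1.1 with h | h | h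
    · right; left
      exact ⟨h, fun a ha =>
        ⟨(hy.2 a (ha.trans h)).1.symm.trans (hx.2 a ha).1,
         (hy.2 a (ha.trans h)).2.symm.trans (hx.2 a ha).2⟩⟩
    · left
      apply TreeAux.node_ext h
      intro a ha
      exact ⟨(hx.2 a ha).1.symm.trans (hy.2 a (h ▸ ha)).1,
             (hx.2 a ha).2.symm.trans (hy.2 a (h ▸ ha)).2⟩
    · right; right
      exact ⟨h, fun a ha =>
        ⟨(hx.2 a (ha.trans h)).1.symm.trans (hy.2 a ha).1,
         (hx.2 a (ha.trans h)).2.symm.trans (hy.2 a ha).2⟩⟩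
  · exact fun t => TreeAux.lvl_lt t
  · intro α hα
    exact ⟨TreeAux.nd (Language.Equiv.refl L M) ⟨α, hα⟩,
      TreeAux.lvl_nd (Language.Equiv.refl L M) ⟨α, hα⟩⟩
  · exact fun α => TreeAux.level_le hCH hM α
  · have hbij : Function.Bijective (fun σ : ULift.{1} (M ≃[L] M) =>
        (⟨TreeAux.Φ σ.down,
          fun i j hij => TreeAux.Φ_mono σ.down hij,
          fun i => TreeAux.lvl_nd σ.down i⟩ :
          {b : O1 → TreeAux.T L M e //
            (∀ i j : O1, i < j → TreeAux.TLT L M e (b i) (b j)) ∧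
            ∀ α : O1, TreeAux.lvl L M e (b α) = (α : Ordinal)})) := by
      constructor
      · intro σ τ h
        have h' : TreeAux.Φ (e := e) σ.down = TreeAux.Φ τ.down :=
          congrArg Subtype.val h
        cases σ; cases τ
        exact congrArg ULift.up (TreeAux.Φ_inj h')
      · rintro ⟨b, hb1, hb2⟩
        obtain ⟨σ, hσ⟩ := TreeAux.Φ_surj b hb1 hb2
        exact ⟨ULift.up σ, Subtype.ext hσ⟩
    rw [Cardinal.mk_congr (Equiv.ofBijective _ hbij).symm, Cardinal.mk_uLift, haut]

end
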